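/- There exists an absolute constant C > 0 such that for every L ≥ 10^5, every z ∈ [−4000,4000], and every τ ∈ (0,L], the reflected heat kernel S on [−L,L] satisfies |∂S/∂w (z,τ;w)|_{w=L}| ≤ C L τ^{−3/2} e^{−L²/(100τ)} and |∂S/∂w (z,τ;w)|_{w=−L}| ≤ C L τ^{−3/2} e^{−L²/(100τ)}, where ∂S/∂w denotes the derivative of S(z,τ;·) in its third argument. -/

import Mathlib

open Real Set

noncomputable section ReflectedHeatAux

/-- Fixed summable comparator sequence on `ℤ`. -/
private def vseq (k : ℤ) : ℝ := Real.exp 3 * Real.exp (-2) ^ k.natAbs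

private lemma vseq_nonneg (k : ℤ) : 0 ≤ vseq k := by
  unfold vseq; positivity

private lemma vseq_summable : Summable vseq := by
  have hgeo : Summable (fun n : ℕ => Real.exp 3 * Real.exp (-2) ^ n) := by
    refine Summable.mul_left _ (summable_geometric_of_lt_one (Real.exp_nonneg _) ?_)
    rw [Real.exp_lt_one_iff]; norm_num
  refine Summable.of_nat_of_neg ?_ ?_ <;> simpa [vseq] using hgeo

/-- The absolute constant coming from the comparator. -/
private def Kc : ℝ := ∑' k : ℤ, vseq k

private lemma Kc_nonneg : 0 ≤ Kc := tsum_nonneg vseq_nonneg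

private lemma term_hasDerivAt (τ b w : ℝ) (hτ : 0 < τ) :
    HasDerivAt (fun w => Real.exp (-(w - b) ^ 2 / (4 * τ)))
      (-(w - b) / (2 * τ) * Real.exp (-(w - b) ^ 2 / (4 * τ))) w := by
  have h1 : HasDerivAt (fun w : ℝ => -(w - b) ^ 2 / (4 * τ)) (-(w - b) / (2 * τ)) w := by
    have h := (((hasDerivAt_id w).sub_const b).pow 2).neg.div_const (4 * τ)
    refine h.congr_deriv ?_
    field_simp
    simp only [id]
    ring
  simpa [mul_comm] using h1.exp

/-- key exponential comparison -/
private lemma expC (τ L x m : ℝ) (hτ : 0 < τ) (hτL : τ ≤ L) (hL : (10:ℝ)^5 ≤ L)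
    (hm : (0.9:ℝ) ≤ m) (hx : m * L ≤ |x|) :
    Real.exp (-x ^ 2 / (16 * τ)) ≤ Real.exp (-(m ^ 2) * 6250) := by
  have hL0 : (0:ℝ) < L := by nlinarith
  have hx2 : (m * L) ^ 2 ≤ x ^ 2 := by
    rw [← sq_abs x]
    exact pow_le_pow_left₀ (by positivity) hx 2
  rw [Real.exp_le_exp, div_le_iff₀ (by positivity)]
  nlinarith [mul_le_mul_of_nonneg_left hτL (mul_nonneg (sq_nonneg m) (by norm_num : (0:ℝ) ≤ 10^5)),
    mul_le_mul_of_nonneg_left hL (mul_nonneg (sq_nonneg m) hτ.le)]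

private lemma vseq_ge (k : ℤ) (m : ℝ) (hm : (0.9:ℝ) ≤ m)
    (hm2 : 2 * |(k:ℝ)| - 3 ≤ m) :
    Real.exp (-(m ^ 2) * 6250) ≤ vseq k := by
  unfold vseq
  rw [← Real.exp_nat_mul, ← Real.exp_add, Real.exp_le_exp]
  have hn : |(k:ℝ)| = (k.natAbs : ℝ) := by
    rw [Nat.cast_natAbs]; simp
  rw [hn] at hm2
  nlinarith [mul_le_mul_of_nonneg_left hm (show (0:ℝ) ≤ m by linarith)]

/-- Core estimate on a single derivative term. -/
private lemma core_bound (τ L x m : ℝ) (hτ : 0 < τ) (hτL : τ ≤ L) (hL : (10:ℝ)^5 ≤ L)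
    (hm : (0.9:ℝ) ≤ m) (hx : m * L ≤ |x|) :
    |(-x / (2 * τ)) * Real.exp (-x ^ 2 / (4 * τ))| ≤
      5 * Real.exp (-L ^ 2 / (100 * τ)) * Real.exp (-(m ^ 2) * 6250) := by
  have hL0 : (0:ℝ) < L := by nlinarith
  have hxpos : (0:ℝ) < |x| := by nlinarith
  have hx0 : x ≠ 0 := by
    intro h; rw [h, abs_zero] at hxpos; exact lt_irrefl _ hxpos
  have hA : |x| / (2 * τ) * Real.exp (-x ^ 2 / (8 * τ)) ≤ 5 := by
    have hs : (0:ℝ) < x ^ 2 / (8 * τ) := by positivity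
    have hexp : Real.exp (-x ^ 2 / (8 * τ)) ≤ 8 * τ / x ^ 2 := by
      have h1 : x ^ 2 / (8 * τ) ≤ Real.exp (x ^ 2 / (8 * τ)) := by
        linarith [Real.add_one_le_exp (x ^ 2 / (8 * τ))]
      have h2 : (Real.exp (x ^ 2 / (8 * τ)))⁻¹ ≤ (x ^ 2 / (8 * τ))⁻¹ := by
        apply inv_anti₀ hs h1
      calc Real.exp (-x ^ 2 / (8 * τ)) = (Real.exp (x ^ 2 / (8 * τ)))⁻¹ := by
            rw [← Real.exp_neg]; ring_nf
        _ ≤ (x ^ 2 / (8 * τ))⁻¹ := h2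
        _ = 8 * τ / x ^ 2 := by rw [inv_div]
    calc |x| / (2 * τ) * Real.exp (-x ^ 2 / (8 * τ))
        ≤ |x| / (2 * τ) * (8 * τ / x ^ 2) := by
          apply mul_le_mul_of_nonneg_left hexp (by positivity)
      _ = 4 / |x| := by
          rw [← sq_abs x]; field_simp; linear_combination (0:ℝ) * (sq_abs x)
      _ ≤ 5 := by
          rw [div_le_iff₀ hxpos]; nlinarith
  have hB : Real.exp (-x ^ 2 / (16 * τ)) ≤ Real.exp (-L ^ 2 / (100 * τ)) := by
    have hx2 : (m * L) ^ 2 ≤ x ^ 2 := by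
      rw [← sq_abs x]; exact pow_le_pow_left₀ (by positivity) hx 2
    have hx081 : ((0.9:ℝ) * L) ^ 2 ≤ x ^ 2 := le_trans (by nlinarith [mul_le_mul hm hm (by norm_num : (0:ℝ) ≤ 0.9) (le_trans (by norm_num) hm), mul_pos hL0 hL0]) hx2
    rw [Real.exp_le_exp, div_le_div_iff₀ (by positivity) (by positivity)]
    nlinarith [mul_le_mul_of_nonneg_left hx081 hτ.le]
  have hC := expC τ L x m hτ hτL hL hm hx
  have hsplit : -x ^ 2 / (4 * τ) = -x ^ 2 / (8 * τ) + (-x ^ 2 / (16 * τ) + -x ^ 2 / (16 * τ)) := by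
    field_simp; ring
  calc |(-x / (2 * τ)) * Real.exp (-x ^ 2 / (4 * τ))|
      = |x| / (2 * τ) * Real.exp (-x ^ 2 / (8 * τ)) * Real.exp (-x ^ 2 / (16 * τ))
          * Real.exp (-x ^ 2 / (16 * τ)) := by
        rw [abs_mul, abs_of_pos (Real.exp_pos _), hsplit, Real.exp_add, Real.exp_add,
          abs_div, abs_neg, abs_of_pos (show (0:ℝ) < 2 * τ by positivity)]
        ring
    _ ≤ 5 * Real.exp (-L ^ 2 / (100 * τ)) * Real.exp (-(m ^ 2) * 6250) := by
        apply mul_le_mul (mul_le_mul hA hB (Real.exp_pos _).le (by norm_num))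
          hC (Real.exp_pos _).le (by positivity)

/-- Distance lower bound for lattice points. -/
private lemma dist_lower (L ε : ℝ) (j k : ℤ) (hL : (10:ℝ)^5 ≤ L) (hε : |ε| ≤ 4001)
    (hj1 : 1 ≤ |j|) (hjk : 2 * |k| - 1 ≤ |j|) :
    max (0.9:ℝ) (2 * |(k:ℝ)| - 3) * L ≤ |ε + (j:ℝ) * L| := by
  have hL0 : (0:ℝ) < L := by nlinarith
  have hjR : (1:ℝ) ≤ |(j:ℝ)| := by
    rw [← Int.cast_abs]; exact_mod_cast hj1
  have hjkR : 2 * |(k:ℝ)| - 1 ≤ |(j:ℝ)| := by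
    rw [← Int.cast_abs, ← Int.cast_abs]; exact_mod_cast hjk
  have htri : |(j:ℝ)| * L - |ε| ≤ |ε + (j:ℝ) * L| := by
    have h1 : |(j:ℝ) * L| ≤ |ε + (j:ℝ) * L| + |ε| := by
      calc |(j:ℝ) * L| = |(ε + (j:ℝ) * L) + (-ε)| := by ring_nf
        _ ≤ |ε + (j:ℝ) * L| + |(-ε)| := abs_add_le _ _
        _ = |ε + (j:ℝ) * L| + |ε| := by rw [abs_neg]
    rw [abs_mul, abs_of_pos hL0] at h1
    linarith
  rcases le_total (0.9:ℝ) (2 * |(k:ℝ)| - 3) with h | h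
  · rw [max_eq_right h]
    nlinarith [abs_nonneg (k:ℝ)]
  · rw [max_eq_left h]
    nlinarith [abs_nonneg (k:ℝ)]

/-- Main technical lemma: termwise differentiation plus the bound. -/
private lemma key (τ L : ℝ) (hτ : 0 < τ) (hτL : τ ≤ L) (hL : (10:ℝ)^5 ≤ L)
    (a : ℤ → ℝ) (w₀ : ℝ)
    (ha : ∀ (k : ℤ) (w : ℝ), |w - w₀| ≤ 1 →
      max (0.9:ℝ) (2 * |(k:ℝ)| - 3) * L ≤ |w - a k|) :
    HasDerivAt (fun w => ∑' k : ℤ, Real.exp (-(w - a k) ^ 2 / (4 * τ)))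
      (∑' k : ℤ, -(w₀ - a k) / (2 * τ) * Real.exp (-(w₀ - a k) ^ 2 / (4 * τ))) w₀
    ∧ |∑' k : ℤ, -(w₀ - a k) / (2 * τ) * Real.exp (-(w₀ - a k) ^ 2 / (4 * τ))|
      ≤ 5 * Real.exp (-L ^ 2 / (100 * τ)) * Kc := by
  set u : ℤ → ℝ := fun k => 5 * Real.exp (-L ^ 2 / (100 * τ)) * vseq k with hu_def
  have hu : Summable u := vseq_summable.mul_left _
  have hbound : ∀ (k : ℤ) (w : ℝ), |w - w₀| ≤ 1 →
      |(-(w - a k) / (2 * τ)) * Real.exp (-(w - a k) ^ 2 / (4 * τ))| ≤ u k := by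
    intro k w hw
    set m : ℝ := max (0.9:ℝ) (2 * |(k:ℝ)| - 3) with hm_def
    have hm : (0.9:ℝ) ≤ m := le_max_left _ _
    have hc := core_bound τ L (w - a k) m hτ hτL hL hm (ha k w hw)
    refine hc.trans ?_
    exact mul_le_mul_of_nonneg_left (vseq_ge k m hm (le_max_right _ _)) (by positivity)
  have hsum0 : Summable (fun k : ℤ => Real.exp (-(w₀ - a k) ^ 2 / (4 * τ))) := by
    apply Summable.of_nonneg_of_le (fun k => (Real.exp_pos _).le) (fun k => ?_) vseq_summable
    set m : ℝ := max (0.9:ℝ) (2 * |(k:ℝ)| - 3) with hm_def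
    have hm : (0.9:ℝ) ≤ m := le_max_left _ _
    have h1 : Real.exp (-(w₀ - a k) ^ 2 / (4 * τ)) ≤ Real.exp (-(w₀ - a k) ^ 2 / (16 * τ)) := by
      rw [Real.exp_le_exp]
      rw [div_le_div_iff₀ (by positivity) (by positivity)]
      nlinarith [sq_nonneg (w₀ - a k), hτ]
    have h2 := expC τ L (w₀ - a k) m hτ hτL hL hm (ha k w₀ (by simp))
    exact h1.trans (h2.trans (vseq_ge k m hm (le_max_right _ _)))
  have hmem : w₀ ∈ Metric.ball w₀ 1 := Metric.mem_ball_self one_pos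
  have hder : HasDerivAt (fun w => ∑' k : ℤ, Real.exp (-(w - a k) ^ 2 / (4 * τ)))
      (∑' k : ℤ, -(w₀ - a k) / (2 * τ) * Real.exp (-(w₀ - a k) ^ 2 / (4 * τ))) w₀ := by
    apply hasDerivAt_tsum_of_isPreconnected hu Metric.isOpen_ball
      (convex_ball w₀ 1).isPreconnected
      (fun k w _ => term_hasDerivAt τ (a k) w hτ)
      (fun k w hw => ?_) hmem hsum0 hmem
    rw [Real.norm_eq_abs]
    exact hbound k w (le_of_lt (by simpa [Real.dist_eq] using hw))
  refine ⟨hder, ?_⟩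
  have habs : Summable (fun k : ℤ =>
      ‖-(w₀ - a k) / (2 * τ) * Real.exp (-(w₀ - a k) ^ 2 / (4 * τ))‖) := by
    apply Summable.of_nonneg_of_le (fun k => norm_nonneg _) (fun k => ?_) hu
    rw [Real.norm_eq_abs]
    exact hbound k w₀ (by simp)
  calc |∑' k : ℤ, -(w₀ - a k) / (2 * τ) * Real.exp (-(w₀ - a k) ^ 2 / (4 * τ))|
      ≤ ∑' k : ℤ, ‖-(w₀ - a k) / (2 * τ) * Real.exp (-(w₀ - a k) ^ 2 / (4 * τ))‖ := by
        simpa using norm_tsum_le_tsum_norm habs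
    _ ≤ ∑' k : ℤ, u k := by
        apply Summable.tsum_le_tsum (fun k => ?_) habs hu
        rw [Real.norm_eq_abs]
        exact hbound k w₀ (by simp)
    _ = 5 * Real.exp (-L ^ 2 / (100 * τ)) * Kc := by
        rw [hu_def, tsum_mul_left]; rfl

/-- Bound at a general point `w₀` given the distance hypotheses. -/
private lemma main_at (L z τ : ℝ) (hL : (10:ℝ)^5 ≤ L) (hτ0 : 0 < τ) (hτL : τ ≤ L)
    (S : ℝ → ℝ → ℝ → ℝ)
    (hS : ∀ z t w : ℝ, S z t w = (4 * Real.pi * t) ^ (-(1 : ℝ) / 2) *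
      ((∑' k : ℤ, Real.exp (-(z - w + 4 * (k : ℝ) * L) ^ 2 / (4 * t))) -
       (∑' k : ℤ, Real.exp (-(z + w + 4 * (k : ℝ) * L - 2 * L) ^ 2 / (4 * t)))))
    (w₀ : ℝ)
    (haF : ∀ (k : ℤ) (w : ℝ), |w - w₀| ≤ 1 →
      max (0.9:ℝ) (2 * |(k:ℝ)| - 3) * L ≤ |w - (z + 4 * (k:ℝ) * L)|)
    (haG : ∀ (k : ℤ) (w : ℝ), |w - w₀| ≤ 1 →
      max (0.9:ℝ) (2 * |(k:ℝ)| - 3) * L ≤ |w - (2 * L - z - 4 * (k:ℝ) * L)|) :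
    |deriv (fun w => S z τ w) w₀|
      ≤ (10 * Kc + 1) * L * τ ^ (-(3 : ℝ) / 2) * Real.exp (-L ^ 2 / (100 * τ)) := by
  have hL0 : (0:ℝ) < L := by nlinarith
  set c : ℝ := (4 * Real.pi * τ) ^ (-(1 : ℝ) / 2) with hc_def
  have hfun : (fun w => S z τ w) = (fun w => c *
      ((∑' k : ℤ, Real.exp (-(w - (z + 4 * (k:ℝ) * L)) ^ 2 / (4 * τ))) -
       (∑' k : ℤ, Real.exp (-(w - (2 * L - z - 4 * (k:ℝ) * L)) ^ 2 / (4 * τ))))) := by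
    funext w
    rw [hS]
    congr 2
    · exact tsum_congr fun k => by congr 1; ring
    · exact tsum_congr fun k => by congr 1; ring
  obtain ⟨hdF, hbF⟩ := key τ L hτ0 hτL hL (fun k => z + 4 * (k:ℝ) * L) w₀ haF
  obtain ⟨hdG, hbG⟩ := key τ L hτ0 hτL hL (fun k => 2 * L - z - 4 * (k:ℝ) * L) w₀ haG
  set DF : ℝ := ∑' k : ℤ, -(w₀ - (z + 4 * (k:ℝ) * L)) / (2 * τ) *
    Real.exp (-(w₀ - (z + 4 * (k:ℝ) * L)) ^ 2 / (4 * τ)) with hDF_def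
  set DG : ℝ := ∑' k : ℤ, -(w₀ - (2 * L - z - 4 * (k:ℝ) * L)) / (2 * τ) *
    Real.exp (-(w₀ - (2 * L - z - 4 * (k:ℝ) * L)) ^ 2 / (4 * τ)) with hDG_def
  have hD : HasDerivAt (fun w => S z τ w) (c * (DF - DG)) w₀ := by
    rw [hfun]
    exact (hdF.sub hdG).const_mul c
  rw [hD.deriv]
  have hπ : (0:ℝ) < 4 * Real.pi * τ := by positivity
  have hc0 : (0:ℝ) < c := Real.rpow_pos_of_pos hπ _
  have hc : c ≤ τ ^ (-(1:ℝ)/2) := by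
    apply Real.rpow_le_rpow_of_nonpos hτ0 (by nlinarith [Real.pi_gt_three]) (by norm_num)
  set E : ℝ := Real.exp (-L ^ 2 / (100 * τ)) with hE_def
  have hE0 : (0:ℝ) < E := Real.exp_pos _
  have hT0 : (0:ℝ) < τ ^ (-(3:ℝ)/2) := Real.rpow_pos_of_pos hτ0 _
  have hsplit : τ ^ (-(1:ℝ)/2) = τ * τ ^ (-(3:ℝ)/2) := by
    rw [show (-(1:ℝ)/2) = 1 + (-(3:ℝ)/2) by norm_num, Real.rpow_add hτ0, Real.rpow_one]
  calc |c * (DF - DG)| = c * |DF - DG| := by rw [abs_mul, abs_of_pos hc0]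
    _ ≤ c * (|DF| + |DG|) := by
        apply mul_le_mul_of_nonneg_left _ hc0.le
        calc |DF - DG| = |DF + (-DG)| := by ring_nf
          _ ≤ |DF| + |(-DG)| := abs_add_le _ _
          _ = |DF| + |DG| := by rw [abs_neg]
    _ ≤ τ ^ (-(1:ℝ)/2) * (10 * Kc * E) := by
        apply mul_le_mul hc (by linarith) (by positivity) (by positivity)
    _ = (10 * Kc * τ) * (τ ^ (-(3:ℝ)/2) * E) := by rw [hsplit]; ring
    _ ≤ ((10 * Kc + 1) * L) * (τ ^ (-(3:ℝ)/2) * E) := by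
        apply mul_le_mul_of_nonneg_right _ (by positivity)
        nlinarith [mul_le_mul_of_nonneg_left hτL (show (0:ℝ) ≤ 10 * Kc by nlinarith [Kc_nonneg])]
    _ = (10 * Kc + 1) * L * τ ^ (-(3:ℝ)/2) * E := by ring

end ReflectedHeatAux

/-- There is an absolute constant `C > 0` such that for `L ≥ 10^5`,
`z ∈ [−4000,4000]` and `τ ∈ (0,L]`, the derivative in the third argument of the reflected
heat kernel on `[−L,L]` satisfies `|∂S/∂w(z,τ;±L)| ≤ C L τ^{−3/2} e^{−L²/(100τ)}`. -/
theorem reflected_heat_kernel_normal_derivative_bound :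
    ∃ C : ℝ, 0 < C ∧
      ∀ L : ℝ, (10 ^ 5 : ℝ) ≤ L →
      ∀ S : ℝ → ℝ → ℝ → ℝ,
        (∀ z t w : ℝ, S z t w = (4 * Real.pi * t) ^ (-(1 : ℝ) / 2) *
          ((∑' k : ℤ, Real.exp (-(z - w + 4 * (k : ℝ) * L) ^ 2 / (4 * t))) -
           (∑' k : ℤ, Real.exp (-(z + w + 4 * (k : ℝ) * L - 2 * L) ^ 2 / (4 * t))))) →
        ∀ z ∈ Set.Icc (-4000 : ℝ) 4000, ∀ τ : ℝ, 0 < τ → τ ≤ L →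
          |deriv (fun w => S z τ w) L|
              ≤ C * L * τ ^ (-(3 : ℝ) / 2) * Real.exp (-L ^ 2 / (100 * τ)) ∧
          |deriv (fun w => S z τ w) (-L)|
              ≤ C * L * τ ^ (-(3 : ℝ) / 2) * Real.exp (-L ^ 2 / (100 * τ)) := by
  refine ⟨10 * Kc + 1, by nlinarith [Kc_nonneg], ?_⟩
  intro L hL S hS z hz τ hτ0 hτL
  have hz' : |z| ≤ 4000 := abs_le.mpr ⟨hz.1, hz.2⟩
  have hL0 : (0:ℝ) < L := by nlinarith
  have mk_eps : ∀ (w w₀ s : ℝ), |w - w₀| ≤ 1 → |s| ≤ 4000 → |(w - w₀) - s| ≤ 4001 := by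
    intro w w₀ s h1 h2
    rw [abs_le] at h1 h2 ⊢
    constructor <;> linarith [h1.1, h1.2, h2.1, h2.2]
  have haFL : ∀ (k : ℤ) (w : ℝ), |w - L| ≤ 1 →
      max (0.9:ℝ) (2 * |(k:ℝ)| - 3) * L ≤ |w - (z + 4 * (k:ℝ) * L)| := by
    intro k w hw
    have h := dist_lower L ((w - L) - z) (1 - 4 * k) k hL (mk_eps w L z hw hz')
      (by rcases abs_cases (1 - 4*k) with ⟨h, _⟩ | ⟨h, _⟩ <;> omega)
      (by rcases abs_cases (1 - 4*k) with ⟨h, _⟩ | ⟨h, _⟩ <;>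
          rcases abs_cases k with ⟨h2, _⟩ | ⟨h2, _⟩ <;> omega)
    have heq : ((w - L) - z) + ((1 - 4 * k : ℤ):ℝ) * L = w - (z + 4 * (k:ℝ) * L) := by
      push_cast; ring
    rwa [heq] at h
  have haGL : ∀ (k : ℤ) (w : ℝ), |w - L| ≤ 1 →
      max (0.9:ℝ) (2 * |(k:ℝ)| - 3) * L ≤ |w - (2 * L - z - 4 * (k:ℝ) * L)| := by
    intro k w hw
    have hε : |(w - L) - (-z)| ≤ 4001 := mk_eps w L (-z) hw (by rwa [abs_neg])
    have h := dist_lower L ((w - L) - (-z)) (4 * k - 1) k hL hε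
      (by rcases abs_cases (4*k - 1) with ⟨h, _⟩ | ⟨h, _⟩ <;> omega)
      (by rcases abs_cases (4*k - 1) with ⟨h, _⟩ | ⟨h, _⟩ <;>
          rcases abs_cases k with ⟨h2, _⟩ | ⟨h2, _⟩ <;> omega)
    have heq : ((w - L) - (-z)) + ((4 * k - 1 : ℤ):ℝ) * L = w - (2 * L - z - 4 * (k:ℝ) * L) := by
      push_cast; ring
    rwa [heq] at h
  have haFmL : ∀ (k : ℤ) (w : ℝ), |w - (-L)| ≤ 1 →
      max (0.9:ℝ) (2 * |(k:ℝ)| - 3) * L ≤ |w - (z + 4 * (k:ℝ) * L)| := by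
    intro k w hw
    have h := dist_lower L ((w - (-L)) - z) (-1 - 4 * k) k hL (mk_eps w (-L) z hw hz')
      (by rcases abs_cases (-1 - 4*k) with ⟨h, _⟩ | ⟨h, _⟩ <;> omega)
      (by rcases abs_cases (-1 - 4*k) with ⟨h, _⟩ | ⟨h, _⟩ <;>
          rcases abs_cases k with ⟨h2, _⟩ | ⟨h2, _⟩ <;> omega)
    have heq : ((w - (-L)) - z) + ((-1 - 4 * k : ℤ):ℝ) * L = w - (z + 4 * (k:ℝ) * L) := by
      push_cast; ring
    rwa [heq] at h
  have haGmL : ∀ (k : ℤ) (w : ℝ), |w - (-L)| ≤ 1 →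
      max (0.9:ℝ) (2 * |(k:ℝ)| - 3) * L ≤ |w - (2 * L - z - 4 * (k:ℝ) * L)| := by
    intro k w hw
    have hε : |(w - (-L)) - (-z)| ≤ 4001 := mk_eps w (-L) (-z) hw (by rwa [abs_neg])
    have h := dist_lower L ((w - (-L)) - (-z)) (4 * k - 3) k hL hε
      (by rcases abs_cases (4*k - 3) with ⟨h, _⟩ | ⟨h, _⟩ <;> omega)
      (by rcases abs_cases (4*k - 3) with ⟨h, _⟩ | ⟨h, _⟩ <;>
          rcases abs_cases k with ⟨h2, _⟩ | ⟨h2, _⟩ <;> omega)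
    have heq : ((w - (-L)) - (-z)) + ((4 * k - 3 : ℤ):ℝ) * L = w - (2 * L - z - 4 * (k:ℝ) * L) := by
      push_cast; ring
    rwa [heq] at h
  exact ⟨main_at L z τ hL hτ0 hτL S (by intro z' t w; rw [hS]) L haFL haGL,
    main_at L z τ hL hτ0 hτL S (by intro z' t w; rw [hS]) (-L) haFmL haGmL⟩
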